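/- For all real α with 0 ≤ α ≤ 2π/3, α/2 + 2·sin(α) ≤ π − α + 2·sin(α/2). -/

import Mathlib

open Real

lemma stmt8_key (t : ℝ) (ht0 : 0 ≤ t) (ht1 : t ≤ π / 3) :
    2 * sin (2 * t) - 2 * sin t ≤ π - 3 * t := by
  set f : ℝ → ℝ := fun x => π - 3 * x - 2 * sin (2 * x) + 2 * sin x with hf
  have hd : ∀ x : ℝ, HasDerivAt f (-3 - 2 * (cos (2 * x) * 2) + 2 * cos x) x := by
    intro x
    have h1 : HasDerivAt (fun x : ℝ => 2 * x) 2 x := by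
      simpa using (hasDerivAt_id x).const_mul 2
    have h2 : HasDerivAt (fun x : ℝ => sin (2 * x)) (cos (2 * x) * 2) x :=
      (Real.hasDerivAt_sin (2 * x)).comp x h1
    have h3 : HasDerivAt (fun x : ℝ => π - 3 * x) (-3) x := by
      simpa using ((hasDerivAt_id x).const_mul 3).const_sub π
    exact (h3.sub (h2.const_mul 2)).add ((Real.hasDerivAt_sin x).const_mul 2)
  have hanti : AntitoneOn f (Set.Icc 0 (π / 3)) := by
    apply antitoneOn_of_deriv_nonpos (convex_Icc _ _)
    · exact (Continuous.continuousOn (by fun_prop))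
    · intro x hx
      exact (hd x).differentiableAt.differentiableWithinAt
    · intro x hx
      rw [interior_Icc] at hx
      rw [(hd x).deriv]
      have hc : cos x ≥ 1 / 2 := by
        rw [show (1:ℝ)/2 = cos (π/3) by rw [Real.cos_pi_div_three]]
        apply Real.cos_le_cos_of_nonneg_of_le_pi (le_of_lt hx.1) _ (le_of_lt hx.2)
        linarith [Real.pi_pos]
      have hcos2 : cos (2 * x) = 2 * cos x ^ 2 - 1 := Real.cos_two_mul x
      nlinarith [hcos2, hc]
  have hmem1 : t ∈ Set.Icc 0 (π / 3) := ⟨ht0, ht1⟩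
  have hmem2 : π / 3 ∈ Set.Icc 0 (π / 3) := ⟨by positivity, le_refl _⟩
  have := hanti hmem1 hmem2 ht1
  have hval : f (π / 3) = 0 := by
    have h1 : (2 : ℝ) * (π / 3) = π - π / 3 := by ring
    simp only [hf, h1, Real.sin_pi_sub]
    ring
  simp only [hf] at this hval
  linarith

theorem stmt8 (α : ℝ) (h0 : 0 ≤ α) (h1 : α ≤ 2 * π / 3) :
    α / 2 + 2 * sin α ≤ π - α + 2 * sin (α / 2) := by
  have := stmt8_key (α / 2) (by linarith) (by linarith)
  have h2 : 2 * (α / 2) = α := by ring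
  rw [h2] at this
  linarith
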